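/- On ℂⁿ define the Poisson bracket on smooth functions by the biderivation determined by {z^i, z^j} = 0, {conj(z^i), conj(z^j)} = 0, and {z^i, conj(z^j)} = i (1+|z|²)(δ_{ij} + z^i conj(z^j)). Set w^i = z^i / √(1+|z|²) for i = 1,…,n. Then {w^i, w^j} = 0 and {w^i, conj(w^j)} = i δ_{ij} for all i,j. -/

import Mathlib

open scoped BigOperators
open Complex

/-- The Wirtinger derivative `∂f/∂z^i` of `f : ℂⁿ → ℂ` at `z`. -/
noncomputable def wirt {n : ℕ} (f : (Fin n → ℂ) → ℂ) (i : Fin n) (z : Fin n → ℂ) : ℂ :=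
  (1/2) * (fderiv ℝ f z (Pi.single i 1) - Complex.I * fderiv ℝ f z (Pi.single i Complex.I))

/-- The conjugate Wirtinger derivative `∂f/∂conj(z^i)` at `z`. -/
noncomputable def wirtBar {n : ℕ} (f : (Fin n → ℂ) → ℂ) (i : Fin n) (z : Fin n → ℂ) : ℂ :=
  (1/2) * (fderiv ℝ f z (Pi.single i 1) + Complex.I * fderiv ℝ f z (Pi.single i Complex.I))

/-- The Poisson bivector `P^{i j̄} = {z^i, conj(z^j)} = i (1+|z|²)(δ_{ij} + z^i conj(z^j))`. -/
noncomputable def Pbiv {n : ℕ} (z : Fin n → ℂ) (i j : Fin n) : ℂ :=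
  Complex.I * (1 + ∑ k, z k * (starRingEnd ℂ) (z k)) *
    ((if i = j then 1 else 0) + z i * (starRingEnd ℂ) (z j))

/-- The Poisson bracket on smooth functions of `z, z̄` determined by
`{z^i,z^j} = {z̄^i,z̄^j} = 0` and `{z^i, z̄^j} = P^{i j̄}`, written via Wirtinger
derivatives: `{a,b} = Σ P^{i j̄}(∂_i a ∂_{j̄} b − ∂_i b ∂_{j̄} a)`. -/
noncomputable def pbr {n : ℕ} (a b : (Fin n → ℂ) → ℂ) (z : Fin n → ℂ) : ℂ :=
  ∑ i, ∑ j, Pbiv z i j * (wirt a i z * wirtBar b j z - wirt b i z * wirtBar a j z)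

/-- The canonical coordinates `w^i = z^i / √(1+|z|²)`. -/
noncomputable def wcoord {n : ℕ} (i : Fin n) (z : Fin n → ℂ) : ℂ :=
  z i * ((Real.sqrt (1 + ∑ k, Complex.normSq (z k)) : ℂ))⁻¹

set_option maxHeartbeats 2000000

namespace CpnAux

variable {n : ℕ}

noncomputable def Sr (z : Fin n → ℂ) : ℝ := 1 + ∑ k, Complex.normSq (z k)

lemma Sr_pos (z : Fin n → ℂ) : 0 < Sr z := by
  have : 0 ≤ ∑ k, Complex.normSq (z k) :=
    Finset.sum_nonneg fun k _ => Complex.normSq_nonneg _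
  unfold Sr; linarith

noncomputable def LS (z : Fin n → ℂ) : (Fin n → ℂ) →L[ℝ] ℝ :=
  ∑ k, ((2*(z k).re) • (Complex.reCLM.comp (ContinuousLinearMap.proj k))
      + (2*(z k).im) • (Complex.imCLM.comp (ContinuousLinearMap.proj k)))

lemma hasFDerivAt_Sr (z : Fin n → ℂ) : HasFDerivAt Sr (LS z) z := by
  have hk : ∀ k : Fin n, HasFDerivAt (fun z : Fin n → ℂ => Complex.normSq (z k))
      ((2*(z k).re) • (Complex.reCLM.comp (ContinuousLinearMap.proj k))
      + (2*(z k).im) • (Complex.imCLM.comp (ContinuousLinearMap.proj k))) z := by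
    intro k
    have hre : HasFDerivAt (fun z : Fin n → ℂ => (z k).re)
        (Complex.reCLM.comp (ContinuousLinearMap.proj k)) z :=
      by exact
        (Complex.reCLM.comp (ContinuousLinearMap.proj k)).hasFDerivAt (x := z)
    have him : HasFDerivAt (fun z : Fin n → ℂ => (z k).im)
        (Complex.imCLM.comp (ContinuousLinearMap.proj k)) z :=
      by exact
        (Complex.imCLM.comp (ContinuousLinearMap.proj k)).hasFDerivAt (x := z)
    have h := (hre.mul hre).add (him.mul him)
    have hfun : (fun z : Fin n → ℂ => Complex.normSq (z k))
        = fun z : Fin n → ℂ => (z k).re * (z k).re + (z k).im * (z k).im := by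
      funext u; simp [Complex.normSq_apply]
    rw [hfun]
    refine h.congr_fderiv (ContinuousLinearMap.ext fun v => ?_)
    simp
    ring
  have h := HasFDerivAt.fun_sum (fun k (_ : k ∈ Finset.univ) => hk k)
  have h2 := (hasFDerivAt_const (1:ℝ) z).add h
  have e : (Sr : (Fin n → ℂ) → ℝ) = ((fun x => 1) + fun y => ∑ i, Complex.normSq (y i)) := by
    funext u; simp [Sr]
  rw [e]
  exact h2.congr_fderiv (by rw [zero_add]; rfl)


noncomputable def Rc (z : Fin n → ℂ) : ℂ := ((Real.sqrt (Sr z) : ℝ) : ℂ)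

lemma Rc_ne (z : Fin n → ℂ) : Rc z ≠ 0 := by
  simp only [Rc, Complex.ofReal_ne_zero]
  exact (Real.sqrt_pos.2 (Sr_pos z)).ne'

lemma Rc_sq (z : Fin n → ℂ) :
    (Rc z) ^ 2 = 1 + ∑ k, z k * (starRingEnd ℂ) (z k) := by
  have h : Real.sqrt (Sr z) ^ 2 = Sr z := Real.sq_sqrt (Sr_pos z).le
  rw [Rc, ← Complex.ofReal_pow, h]
  simp [Sr, Complex.mul_conj]

lemma fderiv_wcoord_single (i l : Fin n) (z : Fin n → ℂ) (c : ℂ) :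
    fderiv ℝ (wcoord i) z (Pi.single l c) =
      (if i = l then c else 0) * (Rc z)⁻¹
        - z i * ((((z l).re * c.re + (z l).im * c.im : ℝ)) : ℂ) * (2 * (Rc z)^3)⁻¹ * 2 := by
  have hS := hasFDerivAt_Sr z
  have hsq := Real.hasDerivAt_sqrt (Sr_pos z).ne'
  have hR := hsq.comp_hasFDerivAt z hS
  have hRC := Complex.ofRealCLM.hasFDerivAt.comp z hR
  have hne : ((Real.sqrt (Sr z) : ℝ) : ℂ) ≠ 0 := Rc_ne z
  have hinv := HasFDerivAt.comp (𝕜 := ℝ) z (hasFDerivAt_inv' hne) hRC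
  have hproj : HasFDerivAt (𝕜 := ℝ) (fun u : Fin n → ℂ => u i) (ContinuousLinearMap.proj i) z := by
    have h := (ContinuousLinearMap.proj (R := ℝ) (φ := fun _ : Fin n => ℂ) i).hasFDerivAt (x := z)
    exact h
  have hw := hproj.mul hinv
  have hw' : HasFDerivAt (wcoord i) _ z := hw
  rw [hw'.fderiv]
  simp [LS, ContinuousLinearMap.proj_apply, Pi.single_apply, apply_ite Complex.re,
    apply_ite Complex.im, Finset.mul_sum, mul_ite, ite_mul, Finset.sum_ite_eq',
    Complex.ofReal_mul, Complex.ofReal_add]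
  simp only [apply_ite Complex.ofReal, Complex.ofReal_zero, ite_add_ite, mul_ite, ite_mul,
    mul_zero, zero_mul, add_zero, zero_add, Finset.sum_add_distrib,
    Finset.sum_ite_eq', Finset.mem_univ, if_true]
  have hrfl : Rc z = ((Real.sqrt (Sr z) : ℝ) : ℂ) := rfl
  rw [hrfl]
  split_ifs with h
  · push_cast
    field_simp [hne]
    ring
  · push_cast
    field_simp [hne]
    ring


lemma diff_wcoord (i : Fin n) (z : Fin n → ℂ) : DifferentiableAt ℝ (wcoord i) z := by
  have hS := hasFDerivAt_Sr z
  have hsq := Real.hasDerivAt_sqrt (Sr_pos z).ne'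
  have hR := hsq.comp_hasFDerivAt z hS
  have hRC := Complex.ofRealCLM.hasFDerivAt.comp z hR
  have hne : ((Real.sqrt (Sr z) : ℝ) : ℂ) ≠ 0 := Rc_ne z
  have hinv := HasFDerivAt.comp (𝕜 := ℝ) z (hasFDerivAt_inv' hne) hRC
  have hproj : HasFDerivAt (𝕜 := ℝ) (fun u : Fin n → ℂ => u i) (ContinuousLinearMap.proj i) z := by
    have h := (ContinuousLinearMap.proj (R := ℝ) (φ := fun _ : Fin n => ℂ) i).hasFDerivAt (x := z)
    exact h
  have hw := hproj.mul hinv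
  have hw' : HasFDerivAt (wcoord i) _ z := hw
  exact hw'.differentiableAt

lemma fderiv_conj_apply (f : (Fin n → ℂ) → ℂ) (z v : Fin n → ℂ)
    (hf : DifferentiableAt ℝ f z) :
    fderiv ℝ (fun u => (starRingEnd ℂ) (f u)) z v = (starRingEnd ℂ) (fderiv ℝ f z v) := by
  have h := hf.hasFDerivAt
  have h2 := ((Complex.conjCLE : ℂ ≃L[ℝ] ℂ) : ℂ →L[ℝ] ℂ).hasFDerivAt.comp z h
  have h3 : HasFDerivAt (fun u => (starRingEnd ℂ) (f u))
      (((Complex.conjCLE : ℂ ≃L[ℝ] ℂ) : ℂ →L[ℝ] ℂ).comp (fderiv ℝ f z)) z := by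
    rw [← hf.hasFDerivAt.fderiv] at h2 ⊢
    exact h2
  rw [h3.fderiv]
  simp

lemma wirt_wcoord (i l : Fin n) (z : Fin n → ℂ) :
    wirt (wcoord i) l z =
      (if i = l then 1 else 0) * (Rc z)⁻¹
        - z i * (starRingEnd ℂ) (z l) * (2 * (Rc z)^3)⁻¹ := by
  have hne := Rc_ne z
  unfold wirt
  rw [fderiv_wcoord_single, fderiv_wcoord_single]
  have hc : (starRingEnd ℂ) (z l) = ((z l).re : ℂ) - ((z l).im : ℂ) * Complex.I := by
    apply Complex.ext <;> simp
  rw [hc]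
  simp only [Complex.one_re, Complex.one_im, Complex.I_re, Complex.I_im]
  split_ifs with h
  · push_cast
    field_simp [hne]
    linear_combination (-(Rc z)^2) * Complex.I_mul_I
  · push_cast
    field_simp [hne]
    ring

lemma wirtBar_wcoord (i l : Fin n) (z : Fin n → ℂ) :
    wirtBar (wcoord i) l z = -(z i * z l) * (2 * (Rc z)^3)⁻¹ := by
  have hne := Rc_ne z
  unfold wirtBar
  rw [fderiv_wcoord_single, fderiv_wcoord_single]
  have hc : z l = ((z l).re : ℂ) + ((z l).im : ℂ) * Complex.I := by
    apply Complex.ext <;> simp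
  rw [show z i * z l = z i * (((z l).re : ℂ) + ((z l).im : ℂ) * Complex.I) by rw [← hc]]
  simp only [Complex.one_re, Complex.one_im, Complex.I_re, Complex.I_im]
  split_ifs with h
  · push_cast
    field_simp [hne]
    linear_combination ((Rc z)^2) * Complex.I_mul_I
  · push_cast
    field_simp [hne]
    ring

lemma wirt_conj (f : (Fin n → ℂ) → ℂ) (l : Fin n) (z : Fin n → ℂ)
    (hf : DifferentiableAt ℝ f z) :
    wirt (fun u => (starRingEnd ℂ) (f u)) l z = (starRingEnd ℂ) (wirtBar f l z) := by
  unfold wirt wirtBar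
  rw [fderiv_conj_apply f z _ hf, fderiv_conj_apply f z _ hf]
  simp only [map_mul, map_add, map_sub, map_div₀, map_one, map_ofNat, Complex.conj_I]
  ring

lemma wirtBar_conj (f : (Fin n → ℂ) → ℂ) (l : Fin n) (z : Fin n → ℂ)
    (hf : DifferentiableAt ℝ f z) :
    wirtBar (fun u => (starRingEnd ℂ) (f u)) l z = (starRingEnd ℂ) (wirt f l z) := by
  unfold wirt wirtBar
  rw [fderiv_conj_apply f z _ hf, fderiv_conj_apply f z _ hf]
  simp only [map_mul, map_add, map_sub, map_div₀, map_one, map_ofNat, Complex.conj_I]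
  ring


lemma deltaSum (z : Fin n → ℂ) (l : Fin n) (X : Fin n → ℂ) :
    ∑ m, ((if l = m then (1:ℂ) else 0) + z l * (starRingEnd ℂ) (z m)) * X m
      = X l + z l * ∑ m, (starRingEnd ℂ) (z m) * X m := by
  calc ∑ m, ((if l = m then (1:ℂ) else 0) + z l * (starRingEnd ℂ) (z m)) * X m
      = ∑ m, ((if l = m then X m else 0) + z l * ((starRingEnd ℂ) (z m) * X m)) :=
        Finset.sum_congr rfl fun m _ => by split_ifs with h <;> ring
    _ = _ := by
        rw [Finset.sum_add_distrib, Finset.sum_ite_eq, ← Finset.mul_sum]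
        simp

lemma sumX (z : Fin n → ℂ) (j : Fin n) (c1 c2 : ℂ) :
    ∑ m, (starRingEnd ℂ) (z m) * ((if j = m then (1:ℂ) else 0) * c2 + z m * c1)
      = (starRingEnd ℂ) (z j) * c2 + (∑ m, z m * (starRingEnd ℂ) (z m)) * c1 := by
  calc ∑ m, (starRingEnd ℂ) (z m) * ((if j = m then (1:ℂ) else 0) * c2 + z m * c1)
      = ∑ m, ((if j = m then (starRingEnd ℂ) (z m) * c2 else 0)
            + (z m * (starRingEnd ℂ) (z m)) * c1) :=
        Finset.sum_congr rfl fun m _ => by split_ifs with h <;> ring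
    _ = _ := by
        rw [Finset.sum_add_distrib, Finset.sum_ite_eq, ← Finset.sum_mul]
        simp

lemma wirt_conj_wcoord (j l : Fin n) (z : Fin n → ℂ) :
    wirt (fun u => (starRingEnd ℂ) (wcoord j u)) l z
      = -((starRingEnd ℂ) (z j) * (starRingEnd ℂ) (z l)) * (2 * (Rc z)^3)⁻¹ := by
  rw [wirt_conj _ _ _ (diff_wcoord j z), wirtBar_wcoord]
  simp only [map_mul, map_neg, map_inv₀, map_ofNat, map_pow, Rc, Complex.conj_ofReal]

lemma wirtBar_conj_wcoord (j m : Fin n) (z : Fin n → ℂ) :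
    wirtBar (fun u => (starRingEnd ℂ) (wcoord j u)) m z
      = (if j = m then 1 else 0) * (Rc z)⁻¹
        - (starRingEnd ℂ) (z j) * z m * (2 * (Rc z)^3)⁻¹ := by
  rw [wirtBar_conj _ _ _ (diff_wcoord j z), wirt_wcoord]
  simp only [map_sub, map_mul, map_inv₀, map_ofNat, map_pow, Rc, Complex.conj_ofReal,
    Complex.conj_conj, apply_ite (starRingEnd ℂ), map_one, map_zero]

lemma goal1 (i j : Fin n) (z : Fin n → ℂ) : pbr (wcoord i) (wcoord j) z = 0 := by
  have hne := Rc_ne z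
  have hsq := Rc_sq z
  have hT : ∑ k, z k * (starRingEnd ℂ) (z k) = (Rc z) ^ 2 - 1 := by rw [hsq]; ring
  unfold pbr
  calc ∑ l, ∑ m, Pbiv z l m *
        (wirt (wcoord i) l z * wirtBar (wcoord j) m z -
          wirt (wcoord j) l z * wirtBar (wcoord i) m z)
      = ∑ l, ∑ m, ((if l = m then (1:ℂ) else 0) + z l * (starRingEnd ℂ) (z m)) *
          ((if j = m then (1:ℂ) else 0) * 0 + z m *
            (Complex.I * Rc z ^ 2 * ((Rc z)⁻¹ * (2 * Rc z ^ 3)⁻¹) *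
              ((if j = l then 1 else 0) * z i - (if i = l then 1 else 0) * z j))) := by
        refine Finset.sum_congr rfl fun l _ => Finset.sum_congr rfl fun m _ => ?_
        rw [wirt_wcoord, wirt_wcoord, wirtBar_wcoord, wirtBar_wcoord]
        unfold Pbiv
        rw [← hsq]
        ring
    _ = ∑ l, (((if j = l then (1:ℂ) else 0) * 0 + z l *
            (Complex.I * Rc z ^ 2 * ((Rc z)⁻¹ * (2 * Rc z ^ 3)⁻¹) *
              ((if j = l then 1 else 0) * z i - (if i = l then 1 else 0) * z j)))
          + z l * ((starRingEnd ℂ) (z j) * 0 +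
            (∑ m, z m * (starRingEnd ℂ) (z m)) *
              (Complex.I * Rc z ^ 2 * ((Rc z)⁻¹ * (2 * Rc z ^ 3)⁻¹) *
                ((if j = l then 1 else 0) * z i - (if i = l then 1 else 0) * z j)))) := by
        refine Finset.sum_congr rfl fun l _ => ?_
        rw [deltaSum z l, sumX]
    _ = ∑ l, ((if i = l then z l *
            (Rc z ^ 2 * (Complex.I * Rc z ^ 2 * ((Rc z)⁻¹ * (2 * Rc z ^ 3)⁻¹))) * (-z j) else 0)
          + (if j = l then z l *
            (Rc z ^ 2 * (Complex.I * Rc z ^ 2 * ((Rc z)⁻¹ * (2 * Rc z ^ 3)⁻¹))) * z i else 0)) := by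
        simp only [hT]
        refine Finset.sum_congr rfl fun l _ => ?_
        split_ifs with h1 h2 <;> ring
    _ = 0 := by
        rw [Finset.sum_add_distrib, Finset.sum_ite_eq, Finset.sum_ite_eq]
        simp only [Finset.mem_univ, if_true]
        ring

lemma goal2 (i j : Fin n) (z : Fin n → ℂ) :
    pbr (wcoord i) (fun u => (starRingEnd ℂ) (wcoord j u)) z
      = Complex.I * (if i = j then 1 else 0) := by
  have hne := Rc_ne z
  have hsq := Rc_sq z
  have hT : ∑ k, z k * (starRingEnd ℂ) (z k) = (Rc z) ^ 2 - 1 := by rw [hsq]; ring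
  unfold pbr
  calc ∑ l, ∑ m, Pbiv z l m *
        (wirt (wcoord i) l z * wirtBar (fun u => (starRingEnd ℂ) (wcoord j u)) m z -
          wirt (fun u => (starRingEnd ℂ) (wcoord j u)) l z * wirtBar (wcoord i) m z)
      = ∑ l, ∑ m, ((if l = m then (1:ℂ) else 0) + z l * (starRingEnd ℂ) (z m)) *
          ((if j = m then (1:ℂ) else 0) *
            (Complex.I * Rc z ^ 2 * ((if i = l then (1:ℂ) else 0) * ((Rc z)⁻¹ * (Rc z)⁻¹)
              - z i * (starRingEnd ℂ) (z l) * ((Rc z)⁻¹ * (2 * Rc z ^ 3)⁻¹)))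
          + z m * (-(Complex.I * Rc z ^ 2 * ((if i = l then (1:ℂ) else 0) *
              ((starRingEnd ℂ) (z j) * ((Rc z)⁻¹ * (2 * Rc z ^ 3)⁻¹)))))) := by
        refine Finset.sum_congr rfl fun l _ => Finset.sum_congr rfl fun m _ => ?_
        rw [wirt_wcoord, wirt_conj_wcoord, wirtBar_conj_wcoord, wirtBar_wcoord]
        unfold Pbiv
        rw [← hsq]
        ring
    _ = ∑ l, (((if j = l then (1:ℂ) else 0) *
            (Complex.I * Rc z ^ 2 * ((if i = l then (1:ℂ) else 0) * ((Rc z)⁻¹ * (Rc z)⁻¹)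
              - z i * (starRingEnd ℂ) (z l) * ((Rc z)⁻¹ * (2 * Rc z ^ 3)⁻¹)))
          + z l * (-(Complex.I * Rc z ^ 2 * ((if i = l then (1:ℂ) else 0) *
              ((starRingEnd ℂ) (z j) * ((Rc z)⁻¹ * (2 * Rc z ^ 3)⁻¹))))))
          + z l * ((starRingEnd ℂ) (z j) *
            (Complex.I * Rc z ^ 2 * ((if i = l then (1:ℂ) else 0) * ((Rc z)⁻¹ * (Rc z)⁻¹)
              - z i * (starRingEnd ℂ) (z l) * ((Rc z)⁻¹ * (2 * Rc z ^ 3)⁻¹)))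
          + (∑ m, z m * (starRingEnd ℂ) (z m)) *
            (-(Complex.I * Rc z ^ 2 * ((if i = l then (1:ℂ) else 0) *
              ((starRingEnd ℂ) (z j) * ((Rc z)⁻¹ * (2 * Rc z ^ 3)⁻¹))))))) := by
        refine Finset.sum_congr rfl fun l _ => ?_
        rw [deltaSum z l, sumX]
    _ = ∑ l, ((if i = l then (z l * (starRingEnd ℂ) (z j)) *
            (Complex.I * Rc z ^ 2 * ((Rc z)⁻¹ * (Rc z)⁻¹
              - (Rc z)⁻¹ * (2 * Rc z ^ 3)⁻¹
              - (Rc z ^ 2 - 1) * ((Rc z)⁻¹ * (2 * Rc z ^ 3)⁻¹))) else 0)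
          + ((if j = l then (Complex.I * Rc z ^ 2) *
              ((if i = l then (1:ℂ) else 0) * ((Rc z)⁻¹ * (Rc z)⁻¹)
                - z i * (starRingEnd ℂ) (z l) * ((Rc z)⁻¹ * (2 * Rc z ^ 3)⁻¹)) else 0)
          + (z l * (starRingEnd ℂ) (z l)) *
            (-(Complex.I * Rc z ^ 2 * (z i * (starRingEnd ℂ) (z j) *
              ((Rc z)⁻¹ * (2 * Rc z ^ 3)⁻¹)))))) := by
        simp only [hT]
        refine Finset.sum_congr rfl fun l _ => ?_
        split_ifs with h1 h2 <;> ring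
    _ = Complex.I * (if i = j then 1 else 0) := by
        rw [Finset.sum_add_distrib, Finset.sum_add_distrib, Finset.sum_ite_eq,
          Finset.sum_ite_eq, ← Finset.sum_mul, hT]
        simp only [Finset.mem_univ, if_true]
        have hp : ∀ k : ℕ, Rc z ^ k * ((Rc z)⁻¹) ^ k = 1 := fun k => by
          rw [← mul_pow, mul_inv_cancel₀ hne, one_pow]
        split_ifs with h
        · field_simp [hne]
          ring
        · field_simp [hne]
          ring

end CpnAux

/-- in the coordinates `w^i = z^i/√(1+|z|²)` the ℂPⁿ Poisson bracket
takes the canonical form `{w^i, w^j} = 0`, `{w^i, conj(w^j)} = i δ_{ij}`. -/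
theorem cpn_bracket_canonical_form
    {n : ℕ} (i j : Fin n) (z : Fin n → ℂ) :
    pbr (wcoord i) (wcoord j) z = 0 ∧
    pbr (wcoord i) (fun u => (starRingEnd ℂ) (wcoord j u)) z
      = Complex.I * (if i = j then 1 else 0) := by
  exact ⟨CpnAux.goal1 i j z, CpnAux.goal2 i j z⟩
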